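/- Every finitely generated torsion-free module over a Bézout domain is free. -/

import Mathlib

open Set Submodule LinearMap

/-- A finitely generated submodule of `Fin n → R` over a Bézout domain is free. -/
private lemma IsBezout.free_of_fg_le_pi {R : Type*} [CommRing R] [IsDomain R] [IsBezout R] :
    ∀ (n : ℕ) (N : Submodule R (Fin n → R)), N.FG → Module.Free R N := by
  intro n
  induction n with
  | zero =>
    intro N _
    have : Subsingleton (Fin 0 → R) := ⟨fun a b => funext fun i => i.elim0⟩
    infer_instance
  | succ n ih =>
    intro N hN
    set π : (Fin (n + 1) → R) →ₗ[R] R := LinearMap.proj (Fin.last n) with hπdef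
    set ρ : (Fin (n + 1) → R) →ₗ[R] (Fin n → R) := LinearMap.funLeft R R Fin.castSucc with hρdef
    obtain ⟨a, ha⟩ := (IsBezout.isPrincipal_of_FG _ (hN.map π)).principal
    by_cases h0 : a = 0
    · -- every element of `N` has last coordinate zero
      have hker : ∀ x ∈ N, x (Fin.last n) = 0 := by
        intro x hx
        have h1 : π x ∈ N.map π := Submodule.mem_map_of_mem hx
        rw [ha, h0] at h1
        rw [Submodule.span_zero_singleton] at h1
        simpa [hπdef] using h1
      set f : N →ₗ[R] (Fin n → R) := ρ ∘ₗ N.subtype with hfdef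
      have hfinj : Function.Injective f := by
        intro x y hxy
        ext1
        funext i
        induction i using Fin.lastCases with
        | last => rw [hker _ x.2, hker _ y.2]
        | cast i => exact congrFun hxy i
      have hrange : LinearMap.range f = N.map ρ := by
        rw [hfdef, LinearMap.range_comp, Submodule.range_subtype]
      have : Module.Free R (LinearMap.range f) := by
        refine ih _ ?_
        rw [hrange]; exact hN.map ρ
      exact Module.Free.of_equiv (LinearEquiv.ofInjective f hfinj).symm
    · set ts : R →ₗ[R] R := LinearMap.toSpanSingleton R R a with htsdef
      have htsinj : Function.Injective ts := by
        intro x y hxy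
        have : x * a = y * a := by simpa [htsdef, smul_eq_mul] using hxy
        exact mul_right_cancel₀ h0 this
      set fN : N →ₗ[R] R := π ∘ₗ N.subtype with hfNdef
      have hrange : LinearMap.range fN = LinearMap.range ts := by
        rw [hfNdef, LinearMap.range_comp, Submodule.range_subtype, ← LinearMap.span_singleton_eq_range, ← ha]
      set E : R ≃ₗ[R] LinearMap.range ts := LinearEquiv.ofInjective ts htsinj with hEdef
      set cr : N →ₗ[R] LinearMap.range ts :=
        fN.codRestrict (LinearMap.range ts) (fun x => hrange ▸ LinearMap.mem_range_self fN x)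
        with hcrdef
      set s : N →ₗ[R] R := (E.symm : LinearMap.range ts →ₗ[R] R) ∘ₗ cr with hsdef
      have hcr : LinearMap.range cr = ⊤ := by
        rw [hcrdef, LinearMap.range_codRestrict, hrange]
        exact Submodule.comap_subtype_self _
      have hssurj : Function.Surjective s := by
        have h1 : Function.Surjective cr := LinearMap.range_eq_top.1 hcr
        exact E.symm.surjective.comp h1
      have hkers : ∀ x : N, s x = 0 ↔ fN x = 0 := by
        intro x
        rw [hsdef]
        constructor
        · intro h
          have : cr x = 0 := by
            have := congrArg E h
            simpa using this
          simpa [hcrdef, LinearMap.codRestrict] using congrArg Subtype.val this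
        · intro h
          have : cr x = 0 := by
            apply Subtype.ext
            simpa [hcrdef, LinearMap.codRestrict] using h
          simp [LinearMap.comp_apply, this]
      obtain ⟨g, hg⟩ := s.exists_rightInverse_of_surjective (LinearMap.range_eq_top.2 hssurj)
      have hgy : ∀ y : R, s (g y) = y := fun y => by
        have := DFunLike.congr_fun hg y
        simpa using this
      have hginj : Function.Injective g := by
        intro x y hxy
        have := congrArg s hxy
        rwa [hgy, hgy] at this
      have hcompl : IsCompl (LinearMap.ker s) (LinearMap.range g) := by
        constructor
        · rw [disjoint_def]
          rintro x hx ⟨y, rfl⟩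
          have : y = 0 := by rw [← hgy y]; exact hx
          rw [this, map_zero]
        · rw [codisjoint_iff, eq_top_iff]
          intro x _
          have h1 : x - g (s x) ∈ LinearMap.ker s := by
            simp [LinearMap.mem_ker, map_sub, hgy]
          exact Submodule.mem_sup.2 ⟨x - g (s x), h1, g (s x), ⟨s x, rfl⟩, by abel⟩
      -- `ker s` is finitely generated
      have hNfin : Module.Finite R N := Module.Finite.iff_fg.2 hN
      have hkerfg : (LinearMap.ker s).FG := by
        have heq : LinearMap.ker s = LinearMap.range (LinearMap.id - g ∘ₗ s) := by
          ext x
          constructor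
          · intro hx
            exact ⟨x, by simp [LinearMap.sub_apply, LinearMap.mem_ker.1 hx]⟩
          · rintro ⟨y, rfl⟩
            simp [LinearMap.mem_ker, LinearMap.sub_apply, map_sub, hgy]
        rw [heq, ← Submodule.map_top]
        exact (Module.finite_def.1 hNfin).map _
      -- `ker s` embeds into `Fin n → R`
      have : Module.Free R (LinearMap.ker s) := by
        set φ : LinearMap.ker s →ₗ[R] (Fin n → R) :=
          ρ ∘ₗ N.subtype ∘ₗ (LinearMap.ker s).subtype with hφdef
        have hφinj : Function.Injective φ := by
          intro x y hxy
          ext1; ext1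
          funext i
          induction i using Fin.lastCases with
          | last =>
            have hx : fN x.1 = 0 := (hkers x.1).1 x.2
            have hy : fN y.1 = 0 := (hkers y.1).1 y.2
            simpa [hfNdef, hπdef] using hx.trans hy.symm
          | cast i => exact congrFun hxy i
        have : Module.Free R (LinearMap.range φ) := by
          refine ih _ ?_
          have : Module.Finite R (LinearMap.ker s) := Module.Finite.iff_fg.2 hkerfg
          rw [← Submodule.map_top]
          exact (Module.finite_def.1 this).map φ
        exact Module.Free.of_equiv (LinearEquiv.ofInjective φ hφinj).symm
      have : Module.Free R (LinearMap.range g) :=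
        Module.Free.of_equiv (LinearEquiv.ofInjective g hginj)
      exact Module.Free.of_equiv (Submodule.prodEquivOfIsCompl _ _ hcompl)

/-- Every finitely generated torsion-free module over a Bézout domain is free.
Torsion-freeness over the domain `R` is expressed by `NoZeroSMulDivisors R M`:
`r • m = 0` with `r ≠ 0` implies `m = 0`. -/
theorem free_of_fg_torsionFree_bezout
    {R : Type*} [CommRing R] [IsDomain R] [IsBezout R]
    {M : Type*} [AddCommGroup M] [Module R M]
    [Module.Finite R M] [NoZeroSMulDivisors R M] :
    Module.Free R M := by
  classical
  obtain ⟨k, s, hs⟩ := Module.Finite.exists_fin (R := R) (M := M)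
  obtain ⟨I, indepI, hI⟩ := exists_maximal_linearIndepOn R s
  haveI : Fintype I := Set.Finite.fintype (Set.toFinite I)
  set N : Submodule R M := span R (Set.range fun x : I => s x) with hNdef
  have hN_eq : span R (s '' I) = N := by rw [hNdef, Set.image_eq_range]
  let sI_basis : Module.Basis I R N := Module.Basis.span indepI
  have exists_a : ∀ i : Fin k, ∃ a : R, a ≠ 0 ∧ a • s i ∈ N := by
    intro i
    by_cases hi : i ∈ I
    · exact ⟨1, one_ne_zero, by
        rw [one_smul]; exact subset_span ⟨⟨i, hi⟩, rfl⟩⟩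
    · obtain ⟨a, ha, ha'⟩ := hI i hi
      exact ⟨a, ha, hN_eq ▸ ha'⟩
  choose a ha ha' using exists_a
  set A := ∏ i, a i with hAdef
  have hA0 : A ≠ 0 := Finset.prod_ne_zero_iff.2 fun i _ => ha i
  have hmem : ∀ x : M, A • x ∈ N := by
    have hle : ∀ i, A • s i ∈ N := by
      intro i
      have : (∏ j ∈ {i}ᶜ, a j) • a i • s i ∈ N := N.smul_mem _ (ha' i)
      rwa [← mul_smul, ← Fintype.prod_eq_prod_compl_mul i] at this
    intro x
    have hx : x ∈ span R (Set.range s) := hs ▸ Submodule.mem_top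
    have : (LinearMap.lsmul R M A) x ∈ N := by
      refine Submodule.span_induction ?_ ?_ ?_ ?_ hx
      · rintro _ ⟨i, rfl⟩; simpa using hle i
      · simp
      · intro y z _ _ hy hz; rw [map_add]; exact N.add_mem hy hz
      · intro r y _ hy
        rw [map_smul]; exact N.smul_mem r hy
    simpa using this
  set φ : M →ₗ[R] N := LinearMap.codRestrict N (LinearMap.lsmul R M A) hmem with hφdef
  have hφinj : Function.Injective φ := by
    intro x y hxy
    have h1 : A • x = A • y := congrArg Subtype.val hxy
    have := sub_eq_zero.2 h1
    rw [← smul_sub] at this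
    have := (smul_eq_zero.1 this).resolve_left hA0
    exact sub_eq_zero.1 this
  let e1 : N ≃ₗ[R] (I → R) := sI_basis.equivFun
  let e2 : (I → R) ≃ₗ[R] (Fin (Fintype.card I) → R) :=
    LinearEquiv.funCongrLeft R R (Fintype.equivFin I).symm
  set Φ : M →ₗ[R] (Fin (Fintype.card I) → R) :=
    (e2 : (I → R) →ₗ[R] _) ∘ₗ (e1 : N →ₗ[R] (I → R)) ∘ₗ φ with hΦdef
  have hΦinj : Function.Injective Φ := fun x y h =>
    hφinj (e1.injective (e2.injective (by simpa [hΦdef, LinearMap.comp_apply] using h)))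
  have hfg : (LinearMap.range Φ).FG := by
    rw [← Submodule.map_top]
    exact (Module.finite_def.1 ‹Module.Finite R M›).map Φ
  have : Module.Free R (LinearMap.range Φ) := IsBezout.free_of_fg_le_pi _ _ hfg
  exact Module.Free.of_equiv (LinearEquiv.ofInjective Φ hΦinj).symm
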